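/- Let D be a POMDP with problematic states S^pr (states from which target set T is unreachable under some policy), ranking variables r_s ∈ [0,1] and binary variables t_{s,s'}. Suppose the constraints r_s < r_{s'} + 1 − t_{s,s'} for all problematic state-action pairs (s,α) and s' ∈ succ(s,α), and p_s ≤ 1 − σ_{λ(s),α} + Σ_{s'∈succ(s,α)} t_{s,s'} hold. Then for any fixed deterministic stationary policy σ, if under σ the target T is unreachable from a problematic state s whose chosen action is problematic, any feasible solution must satisfy p_s = 0. -/

import Mathlib

open scoped Classical

/-- A POMDP: transition probabilities, observation function and initial state. -/
structure POMDP (S O Act : Type*) where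
  P : S → Act → S → ℝ
  obs : S → O
  init : S

/-- Transition matrix of the DTMC induced by a deterministic stationary
observation-based policy `σ`. -/
def inducedDet {S O Act : Type*} (M : POMDP S O Act) (σ : O → Act) : S → S → ℝ :=
  fun s s' => M.P s (σ (M.obs s)) s'

/-- `T` is reachable from `s` in the DTMC with transition matrix `P`. -/
def CanReach {S : Type*} (P : S → S → ℝ) (T : Set S) (s : S) : Prop :=
  ∃ t ∈ T, Relation.ReflTransGen (fun a b => 0 < P a b) s t

/-- Problematic states: states from which `T` is unreachable under some deterministic
stationary observation-based policy. -/
def problematicStates {S O Act : Type*} (M : POMDP S O Act) (T : Set S) : Set S :=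
  {s | ∃ σ : O → Act, ¬ CanReach (inducedDet M σ) T s}

/-- Problematic state-action pairs: all successors are problematic. -/
def problematicActs {S O Act : Type*} (M : POMDP S O Act) (T : Set S) : Set (S × Act) :=
  {p | ∀ s', 0 < M.P p.1 p.2 s' → s' ∈ problematicStates M T}

/-- The ranking constraints force `p_s = 0` for states from which, under the encoded
deterministic stationary policy, the target set is unreachable and whose chosen action
is problematic. -/
theorem stmt11 {S O Act : Type*} [Fintype S] [Fintype Act]
    (M : POMDP S O Act) (T : Set S)
    (hP : ∀ s a s', 0 ≤ M.P s a s') (hrow : ∀ s a, ∑ s' : S, M.P s a s' = 1)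
    (σ : O → Act) (p r : S → ℝ) (t : S → S → ℝ)
    -- the variables `p`, `r`, `t` range over [0,1], and `t` is binary
    (hp01 : ∀ s, 0 ≤ p s ∧ p s ≤ 1)
    (hr01 : ∀ s, 0 ≤ r s ∧ r s ≤ 1)
    (ht : ∀ s s', t s s' = 0 ∨ t s s' = 1)
    -- the probability constraints (for the policy encoded by `σ`)
    (hT : ∀ s ∈ T, p s = 1)
    (hprob : ∀ s, s ∉ T → ∀ a : Act,
      p s ≤ (1 - (if σ (M.obs s) = a then (1 : ℝ) else 0)) + ∑ s' : S, M.P s a s' * p s')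
    -- the ranking constraints for problematic state-action pairs
    (hrank : ∀ s a, (s, a) ∈ problematicActs M T → ∀ s', 0 < M.P s a s' →
      r s < r s' + 1 - t s s')
    (hreachCon : ∀ s a, (s, a) ∈ problematicActs M T →
      p s ≤ 1 - (if σ (M.obs s) = a then (1 : ℝ) else 0) +
        ∑ s' ∈ Finset.univ.filter (fun s' => 0 < M.P s a s'), t s s') :
    ∀ s : S, ¬ CanReach (inducedDet M σ) T s →
      (s, σ (M.obs s)) ∈ problematicActs M T → p s = 0 := by
  intro s hs _hact
  classical
  set Pσ := inducedDet M σ with hPσ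
  have key : ∀ x : S, ¬ CanReach Pσ T x → (x, σ (M.obs x)) ∈ problematicActs M T := by
    intro x hx s'' hPs''
    exact ⟨σ, fun ⟨u, hu, hpath⟩ => hx ⟨u, hu, Relation.ReflTransGen.head hPs'' hpath⟩⟩
  have hnT : ∀ x : S, ¬ CanReach Pσ T x → x ∉ T := fun x hx hxT =>
    hx ⟨x, hxT, Relation.ReflTransGen.refl⟩
  set A : Finset S := Finset.univ.filter (fun x => ¬ CanReach Pσ T x) with hA
  have hsA : s ∈ A := by simp [hA, hs]
  obtain ⟨x0, hx0A, hx0max⟩ := A.exists_max_image p ⟨s, hsA⟩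
  set m := p x0 with hm
  set B : Finset S := A.filter (fun x => p x = m) with hB
  have hx0B : x0 ∈ B := by simp [hB, hx0A, hm]
  obtain ⟨x, hxB, hxmax⟩ := B.exists_max_image r ⟨x0, hx0B⟩
  have hxA : x ∈ A := (Finset.mem_filter.mp hxB).1
  have hxm : p x = m := (Finset.mem_filter.mp hxB).2
  have hx : ¬ CanReach Pσ T x := (Finset.mem_filter.mp hxA).2
  have hxnT : x ∉ T := hnT x hx
  have hxact := key x hx
  -- claim : p x ≤ 0
  have hxle : p x ≤ 0 := by
    by_contra hcon
    push_neg at hcon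
    -- from the reachability constraint, some successor has t = 1
    have h1 := hreachCon x (σ (M.obs x)) hxact
    rw [if_pos rfl] at h1
    have hsum : 0 < ∑ s' ∈ Finset.univ.filter (fun s' => 0 < M.P x (σ (M.obs x)) s'),
        t x s' := by linarith
    obtain ⟨s', hs'mem, hts'⟩ : ∃ s' ∈ Finset.univ.filter
        (fun s' => 0 < M.P x (σ (M.obs x)) s'), 0 < t x s' := by
      by_contra hall
      push_neg at hall
      have : ∑ s' ∈ Finset.univ.filter (fun s' => 0 < M.P x (σ (M.obs x)) s'),
          t x s' ≤ 0 := Finset.sum_nonpos hall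
      linarith
    have hPs' : 0 < M.P x (σ (M.obs x)) s' := (Finset.mem_filter.mp hs'mem).2
    have ht1 : t x s' = 1 := by rcases ht x s' with h | h <;> [linarith; exact h]
    have hrlt : r x < r s' := by
      have := hrank x (σ (M.obs x)) hxact s' hPs'
      rw [ht1] at this; linarith
    -- s' is also σ-unreachable
    have hs'A : s' ∈ A := by
      simp only [hA, Finset.mem_filter, Finset.mem_univ, true_and]
      exact fun ⟨u, hu, hpath⟩ => hx ⟨u, hu, Relation.ReflTransGen.head hPs' hpath⟩
    have hps'lt : p s' < m := by
      rcases lt_or_eq_of_le (hx0max s' hs'A) with h | h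
      · exact h
      · exfalso
        have : s' ∈ B := by simp [hB, hs'A, h]
        exact absurd (hxmax s' this) (not_le.mpr hrlt)
    -- the probability constraint gives a contradiction
    have h2 := hprob x hxnT (σ (M.obs x))
    rw [if_pos rfl] at h2
    have hsucc : ∀ s'' : S, M.P x (σ (M.obs x)) s'' * p s'' ≤
        M.P x (σ (M.obs x)) s'' * m := by
      intro s''
      rcases eq_or_lt_of_le (hP x (σ (M.obs x)) s'') with h | h
      · rw [← h]; simp
      · have hs''A : s'' ∈ A := by
          simp only [hA, Finset.mem_filter, Finset.mem_univ, true_and]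
          exact fun ⟨u, hu, hpath⟩ => hx ⟨u, hu, Relation.ReflTransGen.head h hpath⟩
        exact mul_le_mul_of_nonneg_left (hx0max s'' hs''A) h.le
    have hstrict : ∑ s'' : S, M.P x (σ (M.obs x)) s'' * p s'' <
        ∑ s'' : S, M.P x (σ (M.obs x)) s'' * m := by
      apply Finset.sum_lt_sum (fun i _ => hsucc i)
      exact ⟨s', Finset.mem_univ s', by
        exact mul_lt_mul_of_pos_left hps'lt hPs'⟩
    have hsummul : ∑ s'' : S, M.P x (σ (M.obs x)) s'' * m = m := by
      rw [← Finset.sum_mul, hrow x (σ (M.obs x)), one_mul]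
    rw [hsummul] at hstrict
    linarith [hxm ▸ h2]
  have hx0' : p x = 0 := le_antisymm hxle (hp01 x).1
  have hm0 : m = 0 := by rw [← hxm, hx0']
  have := hx0max s hsA
  rw [hm0] at this
  exact le_antisymm this (hp01 s).1
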